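/- Consider the kernel on ℕ given by R_0 = δ_1 and, for x ≥ 1, R_x = (λ/(xμ+λ)) δ_{x+1} + (xμ/(xμ+λ)) δ_{x-1}, where 0 < λ < μ. Let V(x) = e^x. Then there exist θ ∈ (0,1) and K ≥ 0 such that R_x · V ≤ θ V(x) + K for all x ∈ ℕ; explicitly, one can take θ = 2/e and K = sup_{x ≤ λ(e²-2)/μ} R_x · V. -/

import Mathlib

open Real

/-- Lyapunov inequality for the `M/M/∞` embedded chain kernel
`R_0 = δ_1`, `R_x = (λ/(xμ+λ)) δ_{x+1} + (xμ/(xμ+λ)) δ_{x-1}` with `V(x) = e^x`: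
there are `θ ∈ (0,1)`, `K ≥ 0` (explicitly `θ = 2/e` and
`K = sup_{x ≤ λ(e²-2)/μ} R_x·V`) with `R_x·V ≤ θ V(x) + K` for all `x`. -/
theorem stmt_9 (lam mu : ℝ) (hlam : 0 < lam) (hlm : lam < mu)
    (RV : ℕ → ℝ) (hRV0 : RV 0 = Real.exp 1)
    (hRVx : ∀ x : ℕ, 1 ≤ x →
      RV x = (lam * Real.exp ((x : ℝ) + 1) + (x : ℝ) * mu * Real.exp ((x : ℝ) - 1))
        / ((x : ℝ) * mu + lam)) :
    ∃ θ ∈ Set.Ioo (0 : ℝ) 1, ∃ K ≥ (0 : ℝ),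
      θ = 2 / Real.exp 1 ∧
      K = sSup (RV '' {x : ℕ | (x : ℝ) ≤ lam * ((Real.exp 1) ^ 2 - 2) / mu}) ∧
      ∀ x : ℕ, RV x ≤ θ * Real.exp (x : ℝ) + K := by
  have hmu : 0 < mu := hlam.trans hlm
  have he1 : (2 : ℝ) < Real.exp 1 := by
    have := Real.exp_one_gt_d9; linarith
  have he0 : (0 : ℝ) < Real.exp 1 := by linarith
  have he2 : (2 : ℝ) < (Real.exp 1) ^ 2 := by nlinarith
  set c : ℝ := lam * ((Real.exp 1) ^ 2 - 2) / mu with hc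
  have hc0 : 0 ≤ c := div_nonneg (by nlinarith) hmu.le
  set S : Set ℕ := {x : ℕ | (x : ℝ) ≤ c} with hS
  have h0S : (0 : ℕ) ∈ S := by simpa [hS] using hc0
  have hfin : S.Finite := by
    apply (Set.finite_Iic (⌈c⌉₊ : ℕ)).subset
    intro x hx
    simp only [hS, Set.mem_setOf_eq] at hx
    simp only [Set.mem_Iic]
    exact_mod_cast hx.trans (Nat.le_ceil c)
  have hbdd : BddAbove (RV '' S) := (hfin.image RV).bddAbove
  set K : ℝ := sSup (RV '' S) with hK
  have hmemK : ∀ x ∈ S, RV x ≤ K := fun x hx =>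
    le_csSup hbdd (Set.mem_image_of_mem RV hx)
  have hK0 : 0 ≤ K := by
    have := hmemK 0 h0S
    rw [hRV0] at this; linarith
  refine ⟨2 / Real.exp 1, ⟨by positivity, by
    rw [div_lt_one he0]; exact he1⟩, K, hK0, rfl, rfl, ?_⟩
  intro x
  by_cases hx : x ∈ S
  · have := hmemK x hx
    have : (0:ℝ) ≤ 2 / Real.exp 1 * Real.exp x := by positivity
    nlinarith [hmemK x hx]
  · simp only [hS, Set.mem_setOf_eq, not_le] at hx
    have hx1 : 1 ≤ x := by
      rcases Nat.eq_zero_or_pos x with h | h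
      · exfalso; rw [h] at hx; simp at hx; linarith
      · exact h
    rw [hRVx x hx1]
    have hxR : (0:ℝ) < x := by exact_mod_cast hx1
    have hden : 0 < (x : ℝ) * mu + lam := by positivity
    have hkey : lam * ((Real.exp 1)^2 - 2) < (x : ℝ) * mu := by
      rw [hc, div_lt_iff₀ hmu] at hx; linarith
    have hEx : 0 < Real.exp (x : ℝ) := Real.exp_pos _
    have h1 : Real.exp ((x : ℝ) + 1) = Real.exp x * Real.exp 1 := Real.exp_add _ _
    have h2 : Real.exp ((x : ℝ) - 1) = Real.exp x / Real.exp 1 := Real.exp_sub _ _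
    have hmain : (lam * Real.exp ((x : ℝ) + 1) + (x : ℝ) * mu * Real.exp ((x : ℝ) - 1))
        / ((x : ℝ) * mu + lam) ≤ 2 / Real.exp 1 * Real.exp (x : ℝ) := by
      rw [div_le_iff₀ hden, h1, h2]
      have hrw : lam * (Real.exp (x:ℝ) * Real.exp 1) + (x:ℝ) * mu * (Real.exp (x:ℝ) / Real.exp 1)
          = (lam * Real.exp (x:ℝ) * (Real.exp 1) ^ 2 + (x:ℝ) * mu * Real.exp (x:ℝ)) / Real.exp 1 := by
        rw [eq_div_iff (ne_of_gt he0)]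
        field_simp
      rw [hrw, div_le_iff₀ he0]
      have h21 : 2 / Real.exp 1 * Real.exp (x:ℝ) * ((x:ℝ) * mu + lam) * Real.exp 1
          = 2 * Real.exp (x:ℝ) * ((x:ℝ) * mu + lam) := by
        field_simp
      rw [h21]
      nlinarith [mul_pos hEx (sub_pos.mpr hkey)]
    linarith
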